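/- Fix a finite alphabet 𝒳 ⊂ ℝ, n ≥ R ≥ 2. The number of pairs of full-column-rank matrices (X_1, X_2) ∈ 𝒳^{n×R} × 𝒳^{n×R} with X_1 X_2^T = T, for any fixed matrix T, is at most a constant Γ depending only on |𝒳| and R (not on n). -/

import Mathlib

open Matrix
private lemma range_top_of_rank {n R : ℕ} (A : Matrix (Fin R) (Fin n) ℝ) (h : A.rank = R) :
    LinearMap.range A.mulVecLin = ⊤ := by
  apply Submodule.eq_top_of_finrank_eq
  rw [← Matrix.rank, h, Module.finrank_pi]
  simp

private lemma mulVecLin_injective_of_rank {n R : ℕ} (A : Matrix (Fin n) (Fin R) ℝ)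
    (h : A.rank = R) : Function.Injective A.mulVecLin := by
  rw [← LinearMap.ker_eq_bot]
  have h2 := LinearMap.finrank_range_add_finrank_ker A.mulVecLin
  rw [← Matrix.rank, h, Module.finrank_pi, Fintype.card_fin] at h2
  have : Module.finrank ℝ (LinearMap.ker A.mulVecLin) = 0 := by omega
  exact Submodule.finrank_eq_zero.mp this

private lemma mul_cancel_left_of_rank {n R : ℕ} (A : Matrix (Fin n) (Fin R) ℝ)
    (h : A.rank = R) (B C : Matrix (Fin R) (Fin n) ℝ) (hBC : A * B = A * C) : B = C := by
  have inj := mulVecLin_injective_of_rank A h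
  ext r i
  have h1 : (A * B) *ᵥ Pi.single i 1 = (A * C) *ᵥ Pi.single i 1 := by rw [hBC]
  rw [← Matrix.mulVec_mulVec, ← Matrix.mulVec_mulVec] at h1
  have h2 : B *ᵥ Pi.single i 1 = C *ᵥ Pi.single i 1 :=
    inj (by simpa [Matrix.mulVecLin_apply] using h1)
  have h3 := congr_fun h2 r
  simpa [Matrix.mulVec_single] using h3

private lemma factor_of_range_le {n R : ℕ} (A B : Matrix (Fin n) (Fin R) ℝ)
    (h : LinearMap.range B.mulVecLin ≤ LinearMap.range A.mulVecLin) :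
    ∃ W : Matrix (Fin R) (Fin R) ℝ, B = A * W := by
  classical
  have hc : ∀ r : Fin R, ∃ w : Fin R → ℝ, A *ᵥ w = fun i => B i r := by
    intro r
    have : (fun i => B i r) ∈ LinearMap.range B.mulVecLin := by
      refine ⟨Pi.single r 1, ?_⟩
      ext i
      simp [Matrix.mulVecLin, Matrix.mulVec_single]
    exact h this
  choose w hw using hc
  refine ⟨Matrix.of fun j r => w r j, ?_⟩
  ext i r
  have := congr_fun (hw r) i
  simpa [Matrix.mul_apply, Matrix.mulVec, dotProduct] using this.symm

private lemma exists_submatrix_isUnit {n R : ℕ} (A : Matrix (Fin n) (Fin R) ℝ)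
    (h : A.rank = R) : ∃ ρ : Fin R → Fin n, IsUnit (A.submatrix ρ id) := by
  classical
  have hspan : Submodule.span ℝ (Set.range A) = ⊤ := by
    apply Submodule.eq_top_of_finrank_eq
    change Module.finrank ℝ (Submodule.span ℝ (Set.range A.row)) = _
    rw [← Matrix.rank_eq_finrank_span_row, h, Module.finrank_pi, Fintype.card_fin]
  obtain ⟨t, hts, htspan, hti⟩ := exists_linearIndependent ℝ (Set.range A)
  rw [hspan] at htspan
  have htfin : t.Finite := hti.setFinite
  have : Fintype t := htfin.fintype
  have b : Module.Basis t ℝ (Fin R → ℝ) := Module.Basis.mk hti (by rw [Subtype.range_coe, htspan])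
  have hcard : Fintype.card t = R := by
    have := Module.finrank_eq_card_basis b
    rw [Module.finrank_pi, Fintype.card_fin] at this
    omega
  have e : Fin R ≃ t := (Fintype.equivFinOfCardEq hcard).symm
  have hpick : ∀ a : Fin R, ∃ i : Fin n, A i = (e a : Fin R → ℝ) := fun a => hts (e a).2
  choose ρ hρ using hpick
  refine ⟨ρ, ?_⟩
  rw [← Matrix.linearIndependent_rows_iff_isUnit]
  have : (fun a => (A.submatrix ρ id) a) = (fun x : t => (x : Fin R → ℝ)) ∘ e := by
    funext a; ext j; simp [Matrix.submatrix_apply, ← hρ a]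
  change LinearIndependent ℝ (fun a => (A.submatrix ρ id) a)
  rw [this]
  exact hti.comp e e.injective


/-- for a finite alphabet 𝒳 ⊂ ℝ and R ≥ 2, the number of pairs of
full-column-rank matrices (X₁, X₂) with entries in 𝒳 and X₁X₂ᵀ = T is bounded by a
constant Γ independent of n (and of T). -/
theorem pair_count_bounded (𝒳 : Finset ℝ) (R : ℕ) (hR : 2 ≤ R) :
    ∃ Γ : ℕ, ∀ n : ℕ, R ≤ n → ∀ T : Matrix (Fin n) (Fin n) ℝ,
      Nat.card {p : (Fin n → Fin R → ↥𝒳) × (Fin n → Fin R → ↥𝒳) //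
        (Matrix.of fun i r => ((p.1 i r : ℝ))).rank = R ∧
        (Matrix.of fun i r => ((p.2 i r : ℝ))).rank = R ∧
        (Matrix.of fun i r => ((p.1 i r : ℝ))) * (Matrix.of fun i r => ((p.2 i r : ℝ)))ᵀ
          = T} ≤ Γ := by
  classical
  refine ⟨Fintype.card (Fin R → Fin R → ↥𝒳), fun n hn T => ?_⟩
  rcases isEmpty_or_nonempty ({p : (Fin n → Fin R → ↥𝒳) × (Fin n → Fin R → ↥𝒳) //
        (Matrix.of fun i r => ((p.1 i r : ℝ))).rank = R ∧
        (Matrix.of fun i r => ((p.2 i r : ℝ))).rank = R ∧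
        (Matrix.of fun i r => ((p.1 i r : ℝ))) * (Matrix.of fun i r => ((p.2 i r : ℝ)))ᵀ
          = T}) with hE | hNE
  · simp [Nat.card_of_isEmpty]
  obtain ⟨⟨⟨X₁, X₂⟩, hX1, hX2, hXT⟩⟩ := hNE
  set A : Matrix (Fin n) (Fin R) ℝ := Matrix.of fun i r => ((X₁ i r : ℝ)) with hA
  obtain ⟨ρ, hρ⟩ := exists_submatrix_isUnit A hX1
  -- key: range of any solution's first matrix equals range of T
  have key : ∀ Y₁ Y₂ : Matrix (Fin n) (Fin R) ℝ, Y₂.rank = R → Y₁ * Y₂ᵀ = T →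
      LinearMap.range Y₁.mulVecLin = LinearMap.range T.mulVecLin := by
    intro Y₁ Y₂ h2 hT
    have hT2 : LinearMap.range (Y₂ᵀ).mulVecLin = ⊤ :=
      range_top_of_rank _ (by rw [Matrix.rank_transpose]; exact h2)
    rw [← hT, Matrix.mulVecLin_mul, LinearMap.range_comp, hT2, Submodule.map_top]
  have hAT : LinearMap.range A.mulVecLin = LinearMap.range T.mulVecLin :=
    key A _ hX2 hXT
  -- injection into R×R matrices over 𝒳
  have hinj : Function.Injective
      (fun p : {p : (Fin n → Fin R → ↥𝒳) × (Fin n → Fin R → ↥𝒳) //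
        (Matrix.of fun i r => ((p.1 i r : ℝ))).rank = R ∧
        (Matrix.of fun i r => ((p.2 i r : ℝ))).rank = R ∧
        (Matrix.of fun i r => ((p.1 i r : ℝ))) * (Matrix.of fun i r => ((p.2 i r : ℝ)))ᵀ
          = T} => (fun a b => p.1.1 (ρ a) b : Fin R → Fin R → ↥𝒳)) := by
    rintro ⟨⟨p1, p2⟩, hp1, hp2, hpT⟩ ⟨⟨q1, q2⟩, hq1, hq2, hqT⟩ hpq
    simp only at hpq
    set Yp : Matrix (Fin n) (Fin R) ℝ := Matrix.of fun i r => ((p1 i r : ℝ)) with hYp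
    set Yq : Matrix (Fin n) (Fin R) ℝ := Matrix.of fun i r => ((q1 i r : ℝ)) with hYq
    obtain ⟨W, hW⟩ := factor_of_range_le A Yp
      (by rw [key Yp _ hp2 hpT, hAT])
    obtain ⟨W', hW'⟩ := factor_of_range_le A Yq
      (by rw [key Yq _ hq2 hqT, hAT])
    have hsub : A.submatrix ρ id * W = A.submatrix ρ id * W' := by
      ext a b
      have h1 : (p1 (ρ a) b : ℝ) = (q1 (ρ a) b : ℝ) :=
        congrArg Subtype.val (congr_fun (congr_fun hpq a) b)
      have h2 : (A * W) (ρ a) b = (A * W') (ρ a) b := by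
        rw [← hW, ← hW']; exact h1
      simpa [Matrix.mul_apply, Matrix.submatrix_apply] using h2
    have hWW : W = W' := hρ.mul_left_cancel hsub
    have hY : Yp = Yq := by rw [hW, hW', hWW]
    have hp1q1 : p1 = q1 := by
      funext i r
      exact Subtype.ext (congr_fun (congr_fun hY i) r)
    have hp2q2 : p2 = q2 := by
      have hT' : Yp * (Matrix.of fun i r => ((p2 i r : ℝ)))ᵀ
          = Yp * (Matrix.of fun i r => ((q2 i r : ℝ)))ᵀ := by
        rw [hpT, hY, hqT]
      have := mul_cancel_left_of_rank Yp hp1 _ _ hT'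
      funext i r
      exact Subtype.ext (congr_fun (congr_fun (congrArg Matrix.transpose this) i) r)
    exact Subtype.ext (Prod.ext hp1q1 hp2q2)
  calc Nat.card _ ≤ Nat.card (Fin R → Fin R → ↥𝒳) :=
        Nat.card_le_card_of_injective _ hinj
    _ = Fintype.card (Fin R → Fin R → ↥𝒳) := Nat.card_eq_fintype_card
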